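/- Let Δ be a finite set, let H ≤ Sym(Δ) have a transitive normal subgroup N, let m ≥ 1 be an integer, and let G ≤ H ≀ S_m = H^m ⋊ S_m act on V = Δ^m by product action. Assume: (i) the projection of G to S_m is a transitive subgroup of S_m; (ii) the component of G is H, i.e., if G_1 is the stabilizer in G of the first coordinate and π_1 : G_1 → Sym(Δ) is the induced action on the first coordinate, then π_1(G_1) = H; and (iii) the base group power N^m (acting coordinatewise) is contained in G. If Γ is a (G,s)-arc-transitive digraph with vertex set V and s ≥ 2, then there exists a digraph Σ with vertex set Δ such that H is a group of automorphisms of Σ, Σ is (H,s)-arc-transitive, and Γ ≅ Σ^m. -/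

import Mathlib

/-- An `s`-arc of the digraph `(V, r)`. -/
def IsSArc {V : Type*} (r : V → V → Prop) (s : ℕ) (v : ℕ → V) : Prop :=
  ∀ i < s, r (v i) (v (i + 1))

/-- The digraph `(V, r)` is `(G, s)`-arc-transitive. -/
def ArcTrans {V : Type*} (r : V → V → Prop) (G : Subgroup (Equiv.Perm V)) (s : ℕ) : Prop :=
  ∀ v w : ℕ → V, IsSArc r s v → IsSArc r s w → ∃ g ∈ G, ∀ i ≤ s, g (v i) = w i

/-- `g` is an element of the wreath product `H ≀ S_m` in product action on `Δ^m`: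
there are `h_i ∈ H` and `π ∈ S_m` such that the `i`-th coordinate of `g v` is the
image under `h_i` of the `π⁻¹ i`-th coordinate of `v`. -/
def InWreath {Δ : Type*} (H : Subgroup (Equiv.Perm Δ)) (m : ℕ)
    (g : Equiv.Perm (Fin m → Δ)) (h : Fin m → Equiv.Perm Δ) (π : Equiv.Perm (Fin m)) :
    Prop :=
  (∀ i, h i ∈ H) ∧ ∀ (v : Fin m → Δ) (i : Fin m), g v i = h i (v (π⁻¹ i))

theorem Equiv.Perm.inv_apply_self {α : Type*} (f : Equiv.Perm α) (x : α) : f⁻¹ (f x) = x := by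
  simp

/-- **Theorem 2.** Let `H ≤ Sym(Δ)` have a transitive normal subgroup
`N`, and let `G ≤ H ≀ S_m` act on `V = Δ^m` by product action, such that (i) `G`
projects to a transitive subgroup of `S_m`, (ii) the component of `G` (the projection
to `Sym(Δ)` of the stabiliser of the first coordinate) is `H`, and (iii) `N^m ≤ G`.
If `Γ` is a `(G,s)`-arc-transitive digraph with vertex set `V` and `s ≥ 2`, then
`Γ ≅ Σ^m` for some `(H,s)`-arc-transitive digraph `Σ` with vertex set `Δ`. -/
theorem stmt17 {Δ : Type*} [Finite Δ]
    (H N : Subgroup (Equiv.Perm Δ)) (hNH : N ≤ H)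
    (hNnorm : ∀ h ∈ H, ∀ n ∈ N, h * n * h⁻¹ ∈ N)
    (hNtrans : ∀ a b : Δ, ∃ n ∈ N, n a = b)
    (m : ℕ) (hm : 1 ≤ m)
    (G : Subgroup (Equiv.Perm (Fin m → Δ)))
    -- G ≤ H ≀ S_m in product action:
    (hGwr : ∀ g ∈ G, ∃ h π, InWreath H m g h π)
    -- (i) G projects to a transitive subgroup of S_m:
    (hπtrans : ∀ i j : Fin m, ∃ g ∈ G, ∃ h π, InWreath H m g h π ∧ π i = j)
    -- (ii) the component of G is H:
    (hcomp : (H : Set (Equiv.Perm Δ)) =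
      {x | ∃ g ∈ G, ∃ h π, InWreath H m g h π ∧
        π (⟨0, by omega⟩ : Fin m) = ⟨0, by omega⟩ ∧ h (⟨0, by omega⟩ : Fin m) = x})
    -- (iii) N^m ≤ G:
    (hNm : ∀ n : Fin m → Equiv.Perm Δ, (∀ i, n i ∈ N) →
      (Equiv.piCongrRight n : Equiv.Perm (Fin m → Δ)) ∈ G)
    -- Γ, a (G,s)-arc-transitive digraph with vertex set Δ^m:
    (r : (Fin m → Δ) → (Fin m → Δ) → Prop)
    (hirr : ∀ v, ¬ r v v) (hasym : ∀ u v, r u v → ¬ r v u)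
    (hGaut : ∀ g ∈ G, ∀ u v, r u v ↔ r (g u) (g v))
    (s : ℕ) (hs : 2 ≤ s) (hGs : ArcTrans r G s) :
    ∃ rΔ : Δ → Δ → Prop,
      (∀ a, ¬ rΔ a a) ∧ (∀ a b, rΔ a b → ¬ rΔ b a) ∧
      (∀ h ∈ H, ∀ a b, rΔ a b ↔ rΔ (h a) (h b)) ∧
      ArcTrans rΔ H s ∧
      ∃ φ : (Fin m → Δ) ≃ (Fin m → Δ),
        ∀ u v, r u v ↔ ∀ i, rΔ (φ u i) (φ v i) := by
  
  classical
  have hm0 : 0 < m := hm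
  let i0 : Fin m := ⟨0, hm0⟩
  let rΔ : Δ → Δ → Prop := fun a0 b0 => ∃ p q, r p q ∧ p i0 = a0 ∧ q i0 = b0
  by_cases hA : ∃ u v, r u v
  · obtain ⟨a, b, hab⟩ := hA
    -- coordicatewise action of N^m preserves arcs
    have hmove : ∀ (n : Fin m → Equiv.Perm Δ), (∀ i, n i ∈ N) → ∀ u v, r u v →
        r (fun i => n i (u i)) (fun i => n i (v i)) := by
      intro n hn u v huv
      have hg := hNm n hn
      have h1 := (hGaut _ hg u v).mp huv
      exact h1
    have hKtrans : ∀ u v : Fin m → Δ, ∃ n : Fin m → Equiv.Perm Δ,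
        (∀ i, n i ∈ N) ∧ ∀ i, n i (u i) = v i := by
      intro u v
      choose n hn1 hn2 using fun i => hNtrans (u i) (v i)
      exact ⟨n, hn1, hn2⟩
    -- every vertex has an out-neighbour
    have hout : ∀ z : Fin m → Δ, ∃ y, r z y := by
      intro z
      obtain ⟨n, hn1, hn2⟩ := hKtrans a z
      refine ⟨fun i => n i (b i), ?_⟩
      have h1 := hmove n hn1 a b hab
      have hz : (fun i => n i (a i)) = z := funext hn2
      rwa [hz] at h1
    choose nxt hnxt using hout
    -- 2-arc transitivity
    have h2arc : ∀ u0 u1 u2 w0 w1 w2 : Fin m → Δ, r u0 u1 → r u1 u2 → r w0 w1 → r w1 w2 →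
        ∃ g ∈ G, g u0 = w0 ∧ g u1 = w1 ∧ g u2 = w2 := by
      intro u0 u1 u2 w0 w1 w2 h01 h12 h01' h12'
      let X : ℕ → (Fin m → Δ) := fun k => match k with
        | 0 => u0 | 1 => u1 | (k+2) => nxt^[k] u2
      let Y : ℕ → (Fin m → Δ) := fun k => match k with
        | 0 => w0 | 1 => w1 | (k+2) => nxt^[k] w2
      have hX : IsSArc r s X := by
        intro k hk
        match k with
        | 0 => exact h01
        | 1 => exact h12
        | (k+2) =>
          show r (nxt^[k] u2) (nxt^[k+1] u2)
          rw [Function.iterate_succ_apply']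
          exact hnxt _
      have hY : IsSArc r s Y := by
        intro k hk
        match k with
        | 0 => exact h01'
        | 1 => exact h12'
        | (k+2) =>
          show r (nxt^[k] w2) (nxt^[k+1] w2)
          rw [Function.iterate_succ_apply']
          exact hnxt _
      obtain ⟨g, hgG, hg⟩ := hGs X Y hX hY
      exact ⟨g, hgG, hg 0 (by omega), hg 1 (by omega), hg 2 hs⟩
    -- coordinatewise N-orbit equivalence of pairs
    let TE : (Fin m → Δ) → (Fin m → Δ) → (Fin m → Δ) → (Fin m → Δ) → Prop :=
      fun u v u' v' => ∀ i, ∃ n ∈ N, n (u i) = u' i ∧ n (v i) = v' i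
    have TE_symm : ∀ u v u' v', TE u v u' v' → TE u' v' u v := by
      intro u v u' v' h i
      obtain ⟨n, hn, h1, h2⟩ := h i
      exact ⟨n⁻¹, N.inv_mem hn, by rw [← h1, Equiv.Perm.inv_apply_self],
        by rw [← h2, Equiv.Perm.inv_apply_self]⟩
    have TE_trans : ∀ u v u' v' u'' v'', TE u v u' v' → TE u' v' u'' v'' → TE u v u'' v'' := by
      intro u v u' v' u'' v'' h h' i
      obtain ⟨n, hn, h1, h2⟩ := h i
      obtain ⟨n', hn', h1', h2'⟩ := h' i
      refine ⟨n' * n, N.mul_mem hn' hn, ?_, ?_⟩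
      · rw [Equiv.Perm.mul_apply, h1, h1']
      · rw [Equiv.Perm.mul_apply, h2, h2']
    have TE_g : ∀ g ∈ G, ∀ u v u' v', TE u v u' v' → TE (g u) (g v) (g u') (g v') := by
      intro g hg u v u' v' h i
      obtain ⟨h', π, hw⟩ := hGwr g hg
      obtain ⟨n, hn, h1, h2⟩ := h (π⁻¹ i)
      refine ⟨h' i * n * (h' i)⁻¹, hNnorm _ (hw.1 i) _ hn, ?_, ?_⟩
      · rw [hw.2 u i, hw.2 u' i, Equiv.Perm.mul_apply, Equiv.Perm.mul_apply,
          Equiv.Perm.inv_apply_self, h1]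
      · rw [hw.2 v i, hw.2 v' i, Equiv.Perm.mul_apply, Equiv.Perm.mul_apply,
          Equiv.Perm.inv_apply_self, h2]
    -- all arcs are coordinatewise N-equivalent
    have claim2 : ∀ u v u' v', r u v → r u' v' → TE u v u' v' := by
      intro u v u' v' huv hu'v'
      obtain ⟨n, hnN, hn⟩ := hKtrans u v
      obtain ⟨n'', hn''N, hn''⟩ := hKtrans u' v
      have harc2 : r v (fun i => n i (v i)) := by
        have h1 := hmove n hnN u v huv
        have e : (fun i => n i (u i)) = v := funext hn
        rwa [e] at h1
      have harc2' : r v (fun i => n'' i (v' i)) := by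
        have h1 := hmove n'' hn''N u' v' hu'v'
        have e : (fun i => n'' i (u' i)) = v := funext hn''
        rwa [e] at h1
      obtain ⟨g, hgG, hg0, hg1, hg2⟩ :=
        h2arc u v (fun i => n i (v i)) u v (fun i => n'' i (v' i)) huv harc2 huv harc2'
      have T1 : TE u v v (fun i => n i (v i)) := fun i => ⟨n i, hnN i, hn i, rfl⟩
      have T2 := TE_g g hgG _ _ _ _ T1
      rw [hg0, hg1, hg2] at T2
      have T3 : TE u' v' v (fun i => n'' i (v' i)) := fun i => ⟨n'' i, hn''N i, hn'' i, rfl⟩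
      exact TE_trans _ _ _ _ _ _ T2 (TE_symm _ _ _ _ T3)
    -- H-invariance of rΔ
    have Hinv : ∀ x : Equiv.Perm Δ, x ∈ H → ∀ a0 b0, rΔ a0 b0 → rΔ (x a0) (x b0) := by
      intro x hx a0 b0 hr0
      obtain ⟨p, q, hpq, hp, hq⟩ := hr0
      have hx' : x ∈ (H : Set (Equiv.Perm Δ)) := hx
      rw [hcomp] at hx'
      obtain ⟨g, hgG, h', π, hw, hπ0, hh0⟩ := hx'
      have hπ0' : π i0 = i0 := hπ0
      have hh0' : h' i0 = x := hh0
      have hπinv : π⁻¹ i0 = i0 := by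
        conv_lhs => rw [← hπ0']
        exact Equiv.Perm.inv_apply_self π i0
      refine ⟨g p, g q, (hGaut g hgG p q).mp hpq, ?_, ?_⟩
      · rw [hw.2 p i0, hπinv, hp, hh0']
      · rw [hw.2 q i0, hπinv, hq, hh0']
    -- arcs project to rΔ in every coordinate
    have AsubBox : ∀ u v, r u v → ∀ i, rΔ (u i) (v i) := by
      intro u v huv i
      obtain ⟨g, hgG, h', π, hw, hπ⟩ := hπtrans i i0
      have hπinv : π⁻¹ i0 = i := by
        conv_lhs => rw [← hπ]
        exact Equiv.Perm.inv_apply_self π i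
      have h1 : rΔ (h' i0 (u i)) (h' i0 (v i)) := by
        refine ⟨g u, g v, (hGaut g hgG u v).mp huv, ?_, ?_⟩
        · rw [hw.2 u i0, hπinv]
        · rw [hw.2 v i0, hπinv]
      have h2 := Hinv (h' i0)⁻¹ (H.inv_mem (hw.1 i0)) _ _ h1
      rwa [Equiv.Perm.inv_apply_self, Equiv.Perm.inv_apply_self] at h2
    -- coordinatewise rΔ implies arc
    have BoxsubA : ∀ u v, (∀ i, rΔ (u i) (v i)) → r u v := by
      intro u v hbox
      have habi : ∀ i, rΔ (a i) (b i) := AsubBox a b hab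
      have key : ∀ i, ∃ n ∈ N, n (a i) = u i ∧ n (b i) = v i := by
        intro i
        obtain ⟨p, q, hpq, hp, hq⟩ := hbox i
        obtain ⟨p', q', hpq', hp', hq'⟩ := habi i
        obtain ⟨n1, hn1, e1, e2⟩ := claim2 a b p q hab hpq i0
        obtain ⟨n2, hn2, e1', e2'⟩ := claim2 a b p' q' hab hpq' i0
        refine ⟨n1 * n2⁻¹, N.mul_mem hn1 (N.inv_mem hn2), ?_, ?_⟩
        · have hstep : n2⁻¹ (a i) = a i0 := by
            rw [← hp', ← e1', Equiv.Perm.inv_apply_self]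
          rw [Equiv.Perm.mul_apply, hstep, e1, hp]
        · have hstep : n2⁻¹ (b i) = b i0 := by
            rw [← hq', ← e2', Equiv.Perm.inv_apply_self]
          rw [Equiv.Perm.mul_apply, hstep, e2, hq]
      choose n hnN hna hnb using key
      have h1 := hmove n hnN a b hab
      have ea : (fun i => n i (a i)) = u := funext hna
      have eb : (fun i => n i (b i)) = v := funext hnb
      rwa [ea, eb] at h1
    refine ⟨rΔ, ?_, ?_, ?_, ?_, Equiv.refl _, ?_⟩
    · intro a0 ha0
      exact hirr (fun _ => a0) (BoxsubA _ _ (fun _ => ha0))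
    · intro a0 b0 h1 h2
      exact hasym (fun _ => a0) (fun _ => b0)
        (BoxsubA _ _ (fun _ => h1)) (BoxsubA _ _ (fun _ => h2))
    · intro x hx a0 b0
      constructor
      · exact Hinv x hx a0 b0
      · intro h
        have h2 := Hinv x⁻¹ (H.inv_mem hx) _ _ h
        rwa [Equiv.Perm.inv_apply_self, Equiv.Perm.inv_apply_self] at h2
    · intro α β hα hβ
      have hX : IsSArc r s (fun k => fun _ => α k) :=
        fun k hk => BoxsubA _ _ (fun _ => hα k hk)
      have hY : IsSArc r s (fun k => fun _ => β k) :=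
        fun k hk => BoxsubA _ _ (fun _ => hβ k hk)
      obtain ⟨g, hgG, hg⟩ := hGs _ _ hX hY
      obtain ⟨h', π, hw⟩ := hGwr g hgG
      refine ⟨h' i0, hw.1 i0, fun k hk => ?_⟩
      have e1 : g (fun _ => α k) i0 = h' i0 (α k) := hw.2 (fun _ => α k) i0
      have e2 : g (fun _ => α k) = fun _ => β k := hg k hk
      have e3 : g (fun _ => α k) i0 = β k := by rw [e2]
      rw [← e1, e3]
    · intro u v
      exact ⟨fun h i => AsubBox u v h i, fun h => BoxsubA u v (fun i => h i)⟩
  · refine ⟨rΔ, ?_, ?_, ?_, ?_, Equiv.refl _, ?_⟩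
    · rintro a0 ⟨p, q, hpq, -, -⟩; exact hA ⟨p, q, hpq⟩
    · rintro a0 b0 ⟨p, q, hpq, -, -⟩ _; exact hA ⟨p, q, hpq⟩
    · intro x hx a0 b0
      constructor
      · rintro ⟨p, q, hpq, -, -⟩; exact absurd ⟨p, q, hpq⟩ hA
      · rintro ⟨p, q, hpq, -, -⟩; exact absurd ⟨p, q, hpq⟩ hA
    · intro α β hα _
      obtain ⟨p, q, hpq, -, -⟩ := hα 0 (by omega)
      exact absurd ⟨p, q, hpq⟩ hA
    · intro u v
      constructor
      · intro h; exact absurd ⟨u, v, h⟩ hA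
      · intro h
        obtain ⟨p, q, hpq, -, -⟩ := h i0
        exact absurd ⟨p, q, hpq⟩ hA
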